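/- (Classification of solutions for n = 13, equal multiplicities.) Define T : ℤ² → ℤ² by T(d, m) = (649d + 2340m + 2142, 180d + 649m + 594). Then T is a bijection of ℤ² mapping the set of integer solutions (d, m) of (2d+3)² − 13(2m+1)² = −4 onto itself, and every integer solution (d, m) of this equation has the form T^j(s) for some j ∈ ℤ and some s ∈ {(−3, 0), (0, 0), (0, −1), (−3, −1)}. -/
import Mathlib


/-- The affine transformation `T(d, m) = (649d + 2340m + 2142, 180d + 649m + 594)`
of `ℤ²`, as a bijection (its linear part has determinant `649² - 2340·180 = 1`). -/
def T : Equiv.Perm (ℤ × ℤ) where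
  toFun p := (649 * p.1 + 2340 * p.2 + 2142, 180 * p.1 + 649 * p.2 + 594)
  invFun p := (649 * p.1 - 2340 * p.2 - 198, -180 * p.1 + 649 * p.2 + 54)
  left_inv := by intro ⟨a, b⟩; simp only [Prod.mk.injEq]; constructor <;> ring
  right_inv := by intro ⟨a, b⟩; simp only [Prod.mk.injEq]; constructor <;> ring

/-- The solution set of `(2d+3)² - 13(2m+1)² = -4`. -/
def Sol13 : Set (ℤ × ℤ) :=
  {p | (2 * p.1 + 3) ^ 2 - 13 * (2 * p.2 + 1) ^ 2 = -4}

/-- None of `113`, `321`, `633`, `1049` is a perfect square (checked mod 35). -/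
lemma notsq (x : ℤ) (h : x^2 = 113 ∨ x^2 = 321 ∨ x^2 = 633 ∨ x^2 = 1049) : False := by
  have h35 : ((x : ZMod 35))^2 = 113 ∨ ((x : ZMod 35))^2 = 321 ∨ ((x : ZMod 35))^2 = 633 ∨ ((x : ZMod 35))^2 = 1049 := by
    rcases h with h | h | h | h
    · left; exact_mod_cast congrArg (Int.cast : ℤ → ZMod 35) h
    · right; left; exact_mod_cast congrArg (Int.cast : ℤ → ZMod 35) h
    · right; right; left; exact_mod_cast congrArg (Int.cast : ℤ → ZMod 35) h
    · right; right; right; exact_mod_cast congrArg (Int.cast : ℤ → ZMod 35) h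
  revert h35
  generalize ((x : ZMod 35)) = a
  revert a
  decide

lemma mem_T {p : ℤ × ℤ} (hp : p ∈ Sol13) : T p ∈ Sol13 := by
  obtain ⟨d, m⟩ := p
  simp only [Sol13, Set.mem_setOf_eq, T, Equiv.coe_fn_mk] at *
  linear_combination hp

lemma mem_Tsymm {p : ℤ × ℤ} (hp : p ∈ Sol13) : T.symm p ∈ Sol13 := by
  obtain ⟨d, m⟩ := p
  simp only [Sol13, Set.mem_setOf_eq, T, Equiv.coe_fn_symm_mk] at *
  linear_combination hp

/-- Descent: every solution is an iterate of a fundamental solution. -/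
lemma aux13 : ∀ n : ℕ, ∀ p : ℤ × ℤ, p ∈ Sol13 → (2 * p.2 + 1).natAbs = n →
    ∃ (j : ℤ) (s : ℤ × ℤ),
      s ∈ ({(-3, 0), (0, 0), (0, -1), (-3, -1)} : Set (ℤ × ℤ)) ∧ p = (T ^ j) s := by
  intro n
  induction n using Nat.strong_induction_on with
  | _ n ih =>
    rintro ⟨d, m⟩ hp hn
    have h : (2 * d + 3) ^ 2 - 13 * (2 * m + 1) ^ 2 = -4 := hp
    by_cases hy1 : m = 0 ∨ m = -1
    · -- fundamental
      have hx9 : (2 * d + 3) ^ 2 = 9 := by rcases hy1 with h' | h' <;> subst h' <;> linarith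
      have hx' : 2 * d + 3 = 3 ∨ 2 * d + 3 = -3 := by
        have h3 : (2 * d + 3 - 3) * (2 * d + 3 + 3) = 0 := by linear_combination hx9
        rcases mul_eq_zero.1 h3 with h' | h' <;> [left; right] <;> linarith
      refine ⟨0, (d, m), ?_, by simp⟩
      simp only [Set.mem_insert_iff, Set.mem_singleton_iff, Prod.mk.injEq]
      omega
    · by_cases hm : -5 ≤ m ∧ m ≤ 4
      · -- impossible middle range
        exfalso
        obtain ⟨hm1, hm2⟩ := hm
        apply notsq (2 * d + 3)
        interval_cases m <;>
          first
            | (exact absurd (by omega) hy1)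
            | (left; linarith)
            | (right; left; linarith)
            | (right; right; left; linarith)
            | (right; right; right; linarith)
      · -- |2m+1| ≥ 11 : descent
        have hy121 : 121 ≤ (2 * m + 1) ^ 2 := by
          rcases (by omega : 5 ≤ m ∨ m ≤ -6) with h' | h' <;> nlinarith
        have hx2 : ((2 * d + 3) * (2 * m + 1)) ^ 2
            = 13 * (2 * m + 1) ^ 4 - 4 * (2 * m + 1) ^ 2 := by
          linear_combination (2 * m + 1) ^ 2 * h
        have hxy0 : (2 * d + 3) * (2 * m + 1) ≠ 0 := by
          intro h0
          rcases mul_eq_zero.1 h0 with h0 | h0 <;> omega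
        rcases lt_or_ge 0 ((2 * d + 3) * (2 * m + 1)) with hxy | hxy
        · -- q = T.symm p
          have hxy1 : 1 ≤ (2 * d + 3) * (2 * m + 1) := hxy
          have key : 2340 * (2 * m + 1) ^ 2 - 360 < 649 * ((2 * d + 3) * (2 * m + 1)) := by
            by_contra hk
            push_neg at hk
            have h1 : 0 ≤ 2340 * (2 * m + 1) ^ 2 - 360 - 649 * ((2 * d + 3) * (2 * m + 1)) := by
              linarith
            have h2 : 0 ≤ 2340 * (2 * m + 1) ^ 2 - 360 + 649 * ((2 * d + 3) * (2 * m + 1)) := by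
              nlinarith
            nlinarith [mul_nonneg h1 h2, hx2, hy121, sq_nonneg ((2 * m + 1) ^ 2 - 121)]
          have hqmem : T.symm (d, m) ∈ Sol13 := mem_Tsymm hp
          have hq2 : 2 * (T.symm (d, m)).2 + 1 = 649 * (2 * m + 1) - 180 * (2 * d + 3) := by
            simp only [T, Equiv.coe_fn_symm_mk]; ring
          have hlt : (2 * (T.symm (d, m)).2 + 1).natAbs < n := by
            rw [← hn, Int.natAbs_lt_iff_sq_lt, hq2]
            nlinarith [key, h]
          obtain ⟨j, s, hs, hqs⟩ := ih _ hlt (T.symm (d, m)) hqmem rfl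
          refine ⟨1 + j, s, hs, ?_⟩
          have hz : (T ^ (1 + j)) s = T ((T ^ j) s) := by
            rw [zpow_add, zpow_one]
            rfl
          rw [hz, ← hqs, Equiv.apply_symm_apply]
        · -- q = T p
          have hxy1 : (2 * d + 3) * (2 * m + 1) ≤ -1 := by omega
          have key : 2340 * (2 * m + 1) ^ 2 - 360 < 649 * (-((2 * d + 3) * (2 * m + 1))) := by
            by_contra hk
            push_neg at hk
            have h1 : 0 ≤ 2340 * (2 * m + 1) ^ 2 - 360 + 649 * ((2 * d + 3) * (2 * m + 1)) := by
              linarith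
            have h2 : 0 ≤ 2340 * (2 * m + 1) ^ 2 - 360 - 649 * ((2 * d + 3) * (2 * m + 1)) := by
              nlinarith
            nlinarith [mul_nonneg h1 h2, hx2, hy121, sq_nonneg ((2 * m + 1) ^ 2 - 121)]
          have hqmem : T (d, m) ∈ Sol13 := mem_T hp
          have hq2 : 2 * (T (d, m)).2 + 1 = 649 * (2 * m + 1) + 180 * (2 * d + 3) := by
            simp only [T, Equiv.coe_fn_mk]; ring
          have hlt : (2 * (T (d, m)).2 + 1).natAbs < n := by
            rw [← hn, Int.natAbs_lt_iff_sq_lt, hq2]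
            nlinarith [key, h]
          obtain ⟨j, s, hs, hqs⟩ := ih _ hlt (T (d, m)) hqmem rfl
          refine ⟨-1 + j, s, hs, ?_⟩
          have hz : (T ^ (-1 + j)) s = T⁻¹ ((T ^ j) s) := by
            rw [zpow_add, zpow_neg_one]
            rfl
          rw [hz, ← hqs]
          exact (Equiv.symm_apply_apply T (d, m)).symm

/-- Classification of solutions for `n = 13`, equal multiplicities: `T` is a
bijection of `ℤ²` mapping the solution set of `(2d+3)² - 13(2m+1)² = -4` onto
itself, and every solution is `T^j(s)` for some `j ∈ ℤ` and some fundamental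
solution `s ∈ {(-3,0), (0,0), (0,-1), (-3,-1)}`. -/
theorem classification_13_equal :
    Function.Bijective (⇑T) ∧
    (⇑T) '' Sol13 = Sol13 ∧
    ∀ p ∈ Sol13, ∃ (j : ℤ) (s : ℤ × ℤ),
      s ∈ ({(-3, 0), (0, 0), (0, -1), (-3, -1)} : Set (ℤ × ℤ)) ∧ p = (T ^ j) s := by
  refine ⟨T.bijective, ?_, fun p hp => aux13 _ p hp rfl⟩
  ext p
  constructor
  · rintro ⟨q, hq, rfl⟩
    exact mem_T hq
  · intro hp
    exact ⟨T.symm p, mem_Tsymm hp, T.apply_symm_apply p⟩
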